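/- Let 2/3 < ν < 4/5 and let ν₋, ν₊ satisfy: ν₋, ν₊ > 0; 3ν/2 − 1 < ν₋ < ν/2; 0 < ν₊ < 1 − ν; ν₋ + ν₊ = 1 − ν. Define S_SG(ζ) := tan((ζ + iπν)/(2i))/tan((ζ − iπν)/(2i)), with g_a(ζ) := sinh((ζ − iπa)/2)/sinh((ζ + iπa)/2) define S_CDD(ζ) := g_{ν−ν₋}(ζ) g_{ν+ν₊}(ζ) g_{1−ν+ν₋}(ζ) g_{1−ν−ν₊}(ζ), set S^{11} := S_SG · S_CDD and S^{21}(ζ) := S^{11}(ζ + iπν/2)·S^{11}(ζ − iπν/2). Then the residues at the s-channel poles agree: the limit as ζ → iπ(1 − ν/2) of (ζ − iπ(1 − ν/2))·S^{21}(ζ) equals the limit as ζ → iπν of (ζ − iπν)·S^{11}(ζ) (i.e. R^{b₁}_{b₁b₂} = R^{b₂}_{b₁b₁}). -/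

import Mathlib

open Complex Filter Topology Real

/-- The sine-Gordon breather–breather (b₁b₁) scattering function. -/
noncomputable def SSG (ν : ℝ) (ζ : ℂ) : ℂ :=
  Complex.tan ((ζ + Complex.I * (Real.pi : ℂ) * (ν : ℂ)) / (2 * Complex.I)) /
  Complex.tan ((ζ - Complex.I * (Real.pi : ℂ) * (ν : ℂ)) / (2 * Complex.I))

/-- The elementary factor g_a(ζ) = sinh((ζ − iπa)/2)/sinh((ζ + iπa)/2). -/
noncomputable def gfac (a : ℝ) (ζ : ℂ) : ℂ :=
  Complex.sinh ((ζ - Complex.I * (Real.pi : ℂ) * (a : ℂ)) / 2) /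
  Complex.sinh ((ζ + Complex.I * (Real.pi : ℂ) * (a : ℂ)) / 2)

/-- The CDD factor S_CDD = g_{ν−ν₋} g_{ν+ν₊} g_{1−ν+ν₋} g_{1−ν−ν₊}. -/
noncomputable def SCDD (ν νm νp : ℝ) (ζ : ℂ) : ℂ :=
  gfac (ν - νm) ζ * gfac (ν + νp) ζ * gfac (1 - ν + νm) ζ * gfac (1 - ν - νp) ζ

/-- The deformed (b₁b₁) scattering function S¹¹ = S_SG·S_CDD. -/
noncomputable def S11 (ν νm νp : ℝ) (ζ : ℂ) : ℂ :=
  SSG ν ζ * SCDD ν νm νp ζ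

/-- The deformed (b₂b₁) scattering function S²¹(ζ) = S¹¹(ζ + iπν/2)·S¹¹(ζ − iπν/2). -/
noncomputable def S21 (ν νm νp : ℝ) (ζ : ℂ) : ℂ :=
  S11 ν νm νp (ζ + Complex.I * (Real.pi : ℂ) * (ν : ℂ) / 2) *
  S11 ν νm νp (ζ - Complex.I * (Real.pi : ℂ) * (ν : ℂ) / 2)

/-! ### Auxiliary lemmas -/

private lemma twoI_ne : (2*Complex.I : ℂ) ≠ 0 := by simp [Complex.I_ne_zero]

private lemma argsimp_add (x y : ℝ) :
    (Complex.I*(π:ℂ)*(x:ℂ) + Complex.I*(π:ℂ)*(y:ℂ))/(2*Complex.I) = ((π*(x+y)/2 : ℝ) : ℂ) := by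
  rw [div_eq_iff twoI_ne]; push_cast; ring

private lemma argsimp_sub (x y : ℝ) :
    (Complex.I*(π:ℂ)*(x:ℂ) - Complex.I*(π:ℂ)*(y:ℂ))/(2*Complex.I) = ((π*(x-y)/2 : ℝ) : ℂ) := by
  rw [div_eq_iff twoI_ne]; push_cast; ring

private lemma sinh_I_eval (t : ℝ) :
    Complex.sinh (Complex.I*(π:ℂ)*(t:ℂ)/2) = Complex.I * (Real.sin (π*t/2) : ℂ) := by
  rw [show Complex.I*(π:ℂ)*(t:ℂ)/2 = ((π*t/2 : ℝ) : ℂ) * Complex.I by push_cast; ring,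
    Complex.sinh_mul_I, ← Complex.ofReal_sin]
  ring

private lemma rsin_ne {s : ℝ} (h1 : 0 < s) (h2 : s < 2) : Real.sin (π*s/2) ≠ 0 :=
  (Real.sin_pos_of_pos_of_lt_pi (by nlinarith [Real.pi_pos]) (by nlinarith [Real.pi_pos])).ne'

private lemma rsin_ne' {s : ℝ} (h1 : -2 < s) (h2 : s < 0) : Real.sin (π*s/2) ≠ 0 := by
  have h := rsin_ne (s := -s) (by linarith) (by linarith)
  rw [show π*(-s)/2 = -(π*s/2) by ring, Real.sin_neg] at h
  simpa using h

private lemma rcos_ne {s : ℝ} (h1 : -1 < s) (h2 : s < 1) : Real.cos (π*s/2) ≠ 0 :=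
  (Real.cos_pos_of_mem_Ioo ⟨by nlinarith [Real.pi_pos], by nlinarith [Real.pi_pos]⟩).ne'

private lemma rcos_ne' {s : ℝ} (h1 : 1 < s) (h2 : s < 3) : Real.cos (π*s/2) ≠ 0 := by
  have h := rcos_ne (s := s - 2) (by linarith) (by linarith)
  rw [show π*(s-2)/2 = π*s/2 - π by ring, Real.cos_sub_pi] at h
  simpa using h

private lemma rtan_ne {s : ℝ} (h0 : s ≠ 0) (h1 : -1 < s) (h2 : s < 1) : Real.tan (π*s/2) ≠ 0 := by
  rw [Real.tan_eq_sin_div_cos]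
  refine div_ne_zero ?_ (rcos_ne h1 h2)
  rcases h0.lt_or_gt with h | h
  · exact rsin_ne' (by linarith) h
  · exact rsin_ne h (by linarith)

/-- real value of the elementary factor on the imaginary axis -/
noncomputable def rg (a x : ℝ) : ℝ := Real.sin (π*(x-a)/2) / Real.sin (π*(x+a)/2)

private lemma rg_pair_eval (a x : ℝ) (h1 : Real.sin (π*(x+a)/2) ≠ 0)
    (h2 : Real.sin (π*(x+(1-a))/2) ≠ 0) :
    rg a x * rg (1-a) x
      = (Real.sin (π*a) - Real.sin (π*x)) / (Real.sin (π*a) + Real.sin (π*x)) := by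
  have e1 : Real.sin (π*(x-(1-a))/2) = -Real.cos (π*(x+a)/2) := by
    rw [show π*(x-(1-a))/2 = π*(x+a)/2 - π/2 by ring, Real.sin_sub_pi_div_two]
  have e2 : Real.sin (π*(x+(1-a))/2) = Real.cos (π*(x-a)/2) := by
    rw [show π*(x+(1-a))/2 = π*(x-a)/2 + π/2 by ring, Real.sin_add_pi_div_two]
  have hc : Real.cos (π*(x-a)/2) ≠ 0 := by rw [← e2]; exact h2
  have hsum : Real.sin (π*a) + Real.sin (π*x)
      = 2 * Real.cos (π*(x-a)/2) * Real.sin (π*(x+a)/2) := by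
    rw [show π*a = π*(x+a)/2 - π*(x-a)/2 by ring, show π*x = π*(x+a)/2 + π*(x-a)/2 by ring,
      Real.sin_add, Real.sin_sub]
    ring
  have hden : Real.sin (π*a) + Real.sin (π*x) ≠ 0 := by
    rw [hsum]; exact mul_ne_zero (mul_ne_zero (by norm_num) hc) h1
  unfold rg
  rw [e1, e2, div_mul_div_comm, div_eq_div_iff (mul_ne_zero h1 hc) hden]
  rw [show π*a = π*(x+a)/2 - π*(x-a)/2 by ring, show π*x = π*(x+a)/2 + π*(x-a)/2 by ring,
    Real.sin_add, Real.sin_sub]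
  ring

private lemma rg_pair (a x : ℝ) (h1 : Real.sin (π*(x+a)/2) ≠ 0)
    (h2 : Real.sin (π*(x+(1-a))/2) ≠ 0)
    (h3 : Real.sin (π*((1-x)+a)/2) ≠ 0)
    (h4 : Real.sin (π*((1-x)+(1-a))/2) ≠ 0) :
    rg a x * rg (1-a) x = rg a (1-x) * rg (1-a) (1-x) := by
  rw [rg_pair_eval a x h1 h2, rg_pair_eval a (1-x) h3 h4,
    show π*(1-x) = π - π*x by ring, Real.sin_pi_sub]

private lemma rg_one (a : ℝ) (h : Real.cos (π*a/2) ≠ 0) : rg a 1 = 1 := by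
  unfold rg
  rw [show π*(1-a)/2 = π/2 - π*a/2 by ring, show π*(1+a)/2 = π*a/2 + π/2 by ring,
    Real.sin_pi_div_two_sub, Real.sin_add_pi_div_two]
  exact div_self h

private lemma gfac_eval (a x : ℝ) :
    gfac a (Complex.I*(π:ℂ)*(x:ℂ)) = ((rg a x : ℝ) : ℂ) := by
  unfold gfac rg
  rw [show (Complex.I*(π:ℂ)*(x:ℂ) - Complex.I*(π:ℂ)*(a:ℂ))/2
        = Complex.I*(π:ℂ)*((x-a : ℝ):ℂ)/2 by push_cast; ring,
    show (Complex.I*(π:ℂ)*(x:ℂ) + Complex.I*(π:ℂ)*(a:ℂ))/2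
        = Complex.I*(π:ℂ)*((x+a : ℝ):ℂ)/2 by push_cast; ring,
    sinh_I_eval, sinh_I_eval, mul_div_mul_left _ _ Complex.I_ne_zero]
  push_cast
  ring

private lemma gfac_contAt (a x : ℝ) (h : Real.sin (π*(x+a)/2) ≠ 0) :
    ContinuousAt (gfac a) (Complex.I*(π:ℂ)*(x:ℂ)) := by
  unfold gfac
  apply ContinuousAt.div
  · fun_prop
  · fun_prop
  · rw [show (Complex.I*(π:ℂ)*(x:ℂ) + Complex.I*(π:ℂ)*(a:ℂ))/2
        = Complex.I*(π:ℂ)*((x+a : ℝ):ℂ)/2 by push_cast; ring, sinh_I_eval]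
    exact mul_ne_zero Complex.I_ne_zero (by exact_mod_cast h)

private lemma SCDD_eval (ν νm νp x : ℝ) :
    SCDD ν νm νp (Complex.I*(π:ℂ)*(x:ℂ))
      = ((rg (ν-νm) x * rg (ν+νp) x * rg (1-ν+νm) x * rg (1-ν-νp) x : ℝ) : ℂ) := by
  unfold SCDD
  rw [gfac_eval, gfac_eval, gfac_eval, gfac_eval]
  push_cast; ring

private lemma SCDD_contAt (ν νm νp x : ℝ)
    (h1 : Real.sin (π*(x+(ν-νm))/2) ≠ 0) (h2 : Real.sin (π*(x+(ν+νp))/2) ≠ 0)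
    (h3 : Real.sin (π*(x+(1-ν+νm))/2) ≠ 0) (h4 : Real.sin (π*(x+(1-ν-νp))/2) ≠ 0) :
    ContinuousAt (SCDD ν νm νp) (Complex.I*(π:ℂ)*(x:ℂ)) := by
  unfold SCDD
  exact (((gfac_contAt _ _ h1).mul (gfac_contAt _ _ h2)).mul (gfac_contAt _ _ h3)).mul
    (gfac_contAt _ _ h4)

private lemma SSG_eval (ν x : ℝ) :
    SSG ν (Complex.I*(π:ℂ)*(x:ℂ))
      = ((Real.tan (π*(x+ν)/2) / Real.tan (π*(x-ν)/2) : ℝ) : ℂ) := by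
  unfold SSG
  rw [argsimp_add, argsimp_sub, ← Complex.ofReal_tan, ← Complex.ofReal_tan]
  push_cast; ring

private lemma tan_contAt_shift (c : ℂ) (q : ℂ) (h : Complex.cos ((q + c)/(2*Complex.I)) ≠ 0) :
    ContinuousAt (fun ζ : ℂ => Complex.tan ((ζ + c)/(2*Complex.I))) q := by
  have hf : ContinuousAt (fun ζ : ℂ => (ζ + c)/(2*Complex.I)) q := by fun_prop
  exact ContinuousAt.comp (g := Complex.tan) (Complex.continuousAt_tan.2 h) hf

private lemma tan_contAt_shift' (c : ℂ) (q : ℂ) (h : Complex.cos ((q - c)/(2*Complex.I)) ≠ 0) :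
    ContinuousAt (fun ζ : ℂ => Complex.tan ((ζ - c)/(2*Complex.I))) q := by
  have hf : ContinuousAt (fun ζ : ℂ => (ζ - c)/(2*Complex.I)) q := by fun_prop
  exact ContinuousAt.comp (g := Complex.tan) (Complex.continuousAt_tan.2 h) hf

private lemma S11_contAt (ν νm νp x : ℝ)
    (hA : Real.cos (π*(x+ν)/2) ≠ 0) (hB : Real.cos (π*(x-ν)/2) ≠ 0)
    (hBt : Real.tan (π*(x-ν)/2) ≠ 0)
    (h1 : Real.sin (π*(x+(ν-νm))/2) ≠ 0) (h2 : Real.sin (π*(x+(ν+νp))/2) ≠ 0)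
    (h3 : Real.sin (π*(x+(1-ν+νm))/2) ≠ 0) (h4 : Real.sin (π*(x+(1-ν-νp))/2) ≠ 0) :
    ContinuousAt (S11 ν νm νp) (Complex.I*(π:ℂ)*(x:ℂ)) := by
  unfold S11 SSG
  refine ContinuousAt.mul (ContinuousAt.div ?_ ?_ ?_) (SCDD_contAt ν νm νp x h1 h2 h3 h4)
  · exact tan_contAt_shift _ _ (by rw [argsimp_add, ← Complex.ofReal_cos]; exact_mod_cast hA)
  · exact tan_contAt_shift' _ _ (by rw [argsimp_sub, ← Complex.ofReal_cos]; exact_mod_cast hB)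
  · rw [argsimp_sub, ← Complex.ofReal_tan]; exact_mod_cast hBt

private lemma tendsto_self_div_tan :
    Tendsto (fun w : ℂ => w / Complex.tan w) (𝓝[≠] (0:ℂ)) (𝓝 1) := by
  have h : HasDerivAt Complex.tan 1 0 := by
    simpa using Complex.hasDerivAt_tan (by simp : Complex.cos 0 ≠ 0)
  have h2 := hasDerivAt_iff_tendsto_slope.mp h
  have h2' : Tendsto (fun w : ℂ => Complex.tan w / w) (𝓝[≠] (0:ℂ)) (𝓝 1) := by
    refine h2.congr fun w => ?_
    simp [slope_def_field, Complex.tan_zero]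
  have h3 := h2'.inv₀ one_ne_zero
  simp only [inv_div, inv_one] at h3
  exact h3

private lemma tendsto_self_div_sin :
    Tendsto (fun w : ℂ => w / Complex.sin w) (𝓝[≠] (0:ℂ)) (𝓝 1) := by
  have h : HasDerivAt Complex.sin 1 0 := by simpa using Complex.hasDerivAt_sin 0
  have h2 := hasDerivAt_iff_tendsto_slope.mp h
  have h2' : Tendsto (fun w : ℂ => Complex.sin w / w) (𝓝[≠] (0:ℂ)) (𝓝 1) := by
    refine h2.congr fun w => ?_
    simp [slope_def_field]
  have h3 := h2'.inv₀ one_ne_zero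
  simp only [inv_div, inv_one] at h3
  exact h3

private lemma phi_tendsto (p : ℂ) :
    Tendsto (fun ζ : ℂ => (ζ - p)/(2*Complex.I)) (𝓝[≠] p) (𝓝[≠] (0:ℂ)) := by
  rw [tendsto_nhdsWithin_iff]
  constructor
  · have hc : Tendsto (fun ζ : ℂ => (ζ - p)/(2*Complex.I)) (𝓝 p) (𝓝 ((p - p)/(2*Complex.I))) := by
      apply Tendsto.div_const; exact (continuous_id.sub continuous_const).tendsto p
    simpa using hc.mono_left nhdsWithin_le_nhds
  · filter_upwards [self_mem_nhdsWithin] with ζ hζ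
    simp only [Set.mem_compl_iff, Set.mem_singleton_iff]
    exact div_ne_zero (sub_ne_zero.2 hζ) twoI_ne

private lemma key_lim1 (p : ℂ) :
    Tendsto (fun ζ : ℂ => (ζ - p) / Complex.tan ((ζ - p)/(2*Complex.I))) (𝓝[≠] p)
      (𝓝 (2*Complex.I)) := by
  have h := (tendsto_self_div_tan.comp (phi_tendsto p)).const_mul (2*Complex.I)
  have h2 : Tendsto (fun ζ : ℂ =>
      2*Complex.I * ((ζ - p)/(2*Complex.I) / Complex.tan ((ζ - p)/(2*Complex.I))))
      (𝓝[≠] p) (𝓝 (2*Complex.I)) := by simpa using h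
  refine h2.congr fun ζ => ?_
  rw [div_div, ← mul_div_assoc, mul_div_mul_left _ _ twoI_ne]

private lemma tendsto_mul_tan_pihalf :
    Tendsto (fun w : ℂ => w * Complex.tan ((π:ℂ)/2 + w)) (𝓝[≠] (0:ℂ)) (𝓝 (-1)) := by
  have hc : Tendsto (fun w : ℂ => Complex.cos w) (𝓝[≠] (0:ℂ)) (𝓝 1) := by
    simpa using (Complex.continuous_cos.tendsto 0).mono_left nhdsWithin_le_nhds
  have h := (tendsto_self_div_sin.mul hc).neg
  have h2 : Tendsto (fun w : ℂ => -(w / Complex.sin w * Complex.cos w)) (𝓝[≠] (0:ℂ))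
      (𝓝 (-1)) := by simpa using h
  refine h2.congr fun w => ?_
  rw [Complex.tan_eq_sin_div_cos, add_comm, Complex.sin_add_pi_div_two,
    Complex.cos_add_pi_div_two, div_neg]
  ring

private lemma key_lim2 (p : ℂ) :
    Tendsto (fun ζ : ℂ => (ζ - p) * Complex.tan ((π:ℂ)/2 + (ζ - p)/(2*Complex.I))) (𝓝[≠] p)
      (𝓝 (-(2*Complex.I))) := by
  have h := (tendsto_mul_tan_pihalf.comp (phi_tendsto p)).const_mul (2*Complex.I)
  have h2 : Tendsto (fun ζ : ℂ =>
      2*Complex.I * ((ζ - p)/(2*Complex.I) * Complex.tan ((π:ℂ)/2 + (ζ - p)/(2*Complex.I))))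
      (𝓝[≠] p) (𝓝 (-(2*Complex.I))) := by
    have he : (2*Complex.I) * (-1 : ℂ) = -(2*Complex.I) := by ring
    simpa [he] using h
  refine h2.congr fun ζ => ?_
  rw [← mul_assoc, mul_div_cancel₀ _ twoI_ne]

set_option maxHeartbeats 1000000 in
/-- the residue of S²¹ at its s-channel pole iπ(1 − ν/2) equals the
residue of S¹¹ at its s-channel pole iπν (both taken as limits of (ζ − p)·f(ζ)):
R^{b₁}_{b₁b₂} = R^{b₂}_{b₁b₁}. -/
theorem residues_agree (ν : ℝ) (h1 : 2/3 < ν) (h2 : ν < 4/5)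
    (νm νp : ℝ) (hm : 0 < νm) (hp : 0 < νp)
    (hm1 : 3*ν/2 - 1 < νm) (hm2 : νm < ν/2)
    (hp1 : νp < 1 - ν) (hsum : νm + νp = 1 - ν) :
    ∃ R : ℂ,
      Filter.Tendsto
        (fun ζ : ℂ => (ζ - Complex.I * (Real.pi : ℂ) * ((1 - ν/2 : ℝ) : ℂ)) * S21 ν νm νp ζ)
        (𝓝[≠] (Complex.I * (Real.pi : ℂ) * ((1 - ν/2 : ℝ) : ℂ))) (𝓝 R) ∧
      Filter.Tendsto
        (fun ζ : ℂ => (ζ - Complex.I * (Real.pi : ℂ) * (ν : ℂ)) * S11 ν νm νp ζ)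
        (𝓝[≠] (Complex.I * (Real.pi : ℂ) * (ν : ℂ))) (𝓝 R) := by
  -- notation for the two poles
  have hνm0 : (0:ℝ) < ν - νm := by linarith
  -- ### Limit of (ζ - iπν) S¹¹ at iπν
  have cos2ν : Complex.cos ((Complex.I*(π:ℂ)*(ν:ℂ) + Complex.I*(π:ℂ)*(ν:ℂ))/(2*Complex.I)) ≠ 0 := by
    rw [argsimp_add, ← Complex.ofReal_cos]
    exact_mod_cast rcos_ne' (s := ν + ν) (by linarith) (by linarith)
  have contG1 : ContinuousAt
      (fun ζ : ℂ => Complex.tan ((ζ + Complex.I*(π:ℂ)*(ν:ℂ))/(2*Complex.I)) * SCDD ν νm νp ζ)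
      (Complex.I*(π:ℂ)*(ν:ℂ)) := by
    refine ContinuousAt.mul (tan_contAt_shift _ _ cos2ν) (SCDD_contAt ν νm νp ν ?_ ?_ ?_ ?_)
    · exact rsin_ne (by linarith) (by linarith)
    · exact rsin_ne (by linarith) (by linarith)
    · exact rsin_ne (by linarith) (by linarith)
    · exact rsin_ne (by linarith) (by linarith)
  have T2 : Tendsto
      (fun ζ : ℂ => (ζ - Complex.I * (Real.pi : ℂ) * (ν : ℂ)) * S11 ν νm νp ζ)
      (𝓝[≠] (Complex.I * (Real.pi : ℂ) * (ν : ℂ)))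
      (𝓝 (2*Complex.I *
        (Complex.tan ((Complex.I*(π:ℂ)*(ν:ℂ) + Complex.I*(π:ℂ)*(ν:ℂ))/(2*Complex.I)) *
          SCDD ν νm νp (Complex.I*(π:ℂ)*(ν:ℂ))))) := by
    have h := (key_lim1 (Complex.I*(π:ℂ)*(ν:ℂ))).mul
      (contG1.tendsto.mono_left nhdsWithin_le_nhds)
    refine h.congr fun ζ => ?_
    simp only [S11, SSG]
    ring
  -- ### Limit of (ζ - iπ(1-ν/2)) S²¹ at iπ(1-ν/2)
  have hq1 : Complex.I*(π:ℂ)*((1 - ν/2 : ℝ):ℂ) + Complex.I*(π:ℂ)*(ν:ℂ)/2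
      = Complex.I*(π:ℂ)*((1:ℝ):ℂ) := by push_cast; ring
  have hq2 : Complex.I*(π:ℂ)*((1 - ν/2 : ℝ):ℂ) - Complex.I*(π:ℂ)*(ν:ℂ)/2
      = Complex.I*(π:ℂ)*((1-ν:ℝ):ℂ) := by push_cast; ring
  -- the singular factor
  have sing : Tendsto
      (fun ζ : ℂ => (ζ - Complex.I*(π:ℂ)*((1 - ν/2 : ℝ):ℂ)) *
        Complex.tan ((ζ - Complex.I*(π:ℂ)*(ν:ℂ)/2 + Complex.I*(π:ℂ)*(ν:ℂ))/(2*Complex.I)))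
      (𝓝[≠] (Complex.I*(π:ℂ)*((1 - ν/2 : ℝ):ℂ))) (𝓝 (-(2*Complex.I))) := by
    refine (key_lim2 (Complex.I*(π:ℂ)*((1 - ν/2 : ℝ):ℂ))).congr fun ζ => ?_
    have harg : (ζ - Complex.I*(π:ℂ)*(ν:ℂ)/2 + Complex.I*(π:ℂ)*(ν:ℂ))/(2*Complex.I)
        = (π:ℂ)/2 + (ζ - Complex.I*(π:ℂ)*((1 - ν/2 : ℝ):ℂ))/(2*Complex.I) := by
      field_simp
      push_cast
      ring
    rw [harg]
  -- continuity of the regular factor of S²¹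
  have contA : ContinuousAt
      (fun ζ : ℂ => S11 ν νm νp (ζ + Complex.I*(π:ℂ)*(ν:ℂ)/2))
      (Complex.I*(π:ℂ)*((1 - ν/2 : ℝ):ℂ)) := by
    have base := S11_contAt ν νm νp 1
      (rcos_ne' (by linarith) (by linarith))
      (rcos_ne (by linarith) (by linarith))
      (rtan_ne (by linarith) (by linarith) (by linarith))
      (rsin_ne (by linarith) (by linarith)) (rsin_ne (by linarith) (by linarith))
      (rsin_ne (by linarith) (by linarith)) (rsin_ne (by linarith) (by linarith))
    have hg : ContinuousAt (S11 ν νm νp)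
        (Complex.I*(π:ℂ)*((1 - ν/2 : ℝ):ℂ) + Complex.I*(π:ℂ)*(ν:ℂ)/2) := by
      rw [hq1]; exact base
    exact ContinuousAt.comp (g := S11 ν νm νp) hg (by fun_prop)
  have hargB : (Complex.I*(π:ℂ)*((1 - ν/2 : ℝ):ℂ) - Complex.I*(π:ℂ)*(ν:ℂ)/2
        - Complex.I*(π:ℂ)*(ν:ℂ))/(2*Complex.I) = ((π*((1-ν)-ν)/2 : ℝ) : ℂ) := by
    rw [div_eq_iff twoI_ne]; push_cast; ring
  have cosB : Complex.cos ((Complex.I*(π:ℂ)*((1 - ν/2 : ℝ):ℂ) - Complex.I*(π:ℂ)*(ν:ℂ)/2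
        - Complex.I*(π:ℂ)*(ν:ℂ))/(2*Complex.I)) ≠ 0 := by
    rw [hargB, ← Complex.ofReal_cos]
    exact_mod_cast rcos_ne (s := (1-ν)-ν) (by linarith) (by linarith)
  have tanB : Complex.tan ((Complex.I*(π:ℂ)*((1 - ν/2 : ℝ):ℂ) - Complex.I*(π:ℂ)*(ν:ℂ)/2
        - Complex.I*(π:ℂ)*(ν:ℂ))/(2*Complex.I)) ≠ 0 := by
    rw [hargB, ← Complex.ofReal_tan]
    exact_mod_cast rtan_ne (s := (1-ν)-ν) (by linarith) (by linarith) (by linarith)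
  have contB : ContinuousAt
      (fun ζ : ℂ => (Complex.tan ((ζ - Complex.I*(π:ℂ)*(ν:ℂ)/2
        - Complex.I*(π:ℂ)*(ν:ℂ))/(2*Complex.I)))⁻¹)
      (Complex.I*(π:ℂ)*((1 - ν/2 : ℝ):ℂ)) := by
    have hf : ContinuousAt (fun ζ : ℂ => (ζ - Complex.I*(π:ℂ)*(ν:ℂ)/2
        - Complex.I*(π:ℂ)*(ν:ℂ))/(2*Complex.I)) (Complex.I*(π:ℂ)*((1 - ν/2 : ℝ):ℂ)) := by
      fun_prop
    have ht : ContinuousAt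
        (fun ζ : ℂ => Complex.tan ((ζ - Complex.I*(π:ℂ)*(ν:ℂ)/2
          - Complex.I*(π:ℂ)*(ν:ℂ))/(2*Complex.I))) (Complex.I*(π:ℂ)*((1 - ν/2 : ℝ):ℂ)) :=
      ContinuousAt.comp (g := Complex.tan) (Complex.continuousAt_tan.2 cosB) hf
    exact ht.inv₀ tanB
  have contC : ContinuousAt
      (fun ζ : ℂ => SCDD ν νm νp (ζ - Complex.I*(π:ℂ)*(ν:ℂ)/2))
      (Complex.I*(π:ℂ)*((1 - ν/2 : ℝ):ℂ)) := by
    have base := SCDD_contAt ν νm νp (1-ν)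
      (rsin_ne (by linarith) (by linarith)) (rsin_ne (by linarith) (by linarith))
      (rsin_ne (by linarith) (by linarith)) (rsin_ne (by linarith) (by linarith))
    have hg : ContinuousAt (SCDD ν νm νp)
        (Complex.I*(π:ℂ)*((1 - ν/2 : ℝ):ℂ) - Complex.I*(π:ℂ)*(ν:ℂ)/2) := by
      rw [hq2]; exact base
    exact ContinuousAt.comp (g := SCDD ν νm νp) hg (by fun_prop)
  have T1 : Tendsto
      (fun ζ : ℂ => (ζ - Complex.I * (Real.pi : ℂ) * ((1 - ν/2 : ℝ) : ℂ)) * S21 ν νm νp ζ)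
      (𝓝[≠] (Complex.I * (Real.pi : ℂ) * ((1 - ν/2 : ℝ) : ℂ)))
      (𝓝 (-(2*Complex.I) *
        (S11 ν νm νp (Complex.I*(π:ℂ)*((1 - ν/2 : ℝ):ℂ) + Complex.I*(π:ℂ)*(ν:ℂ)/2) *
          (Complex.tan ((Complex.I*(π:ℂ)*((1 - ν/2 : ℝ):ℂ) - Complex.I*(π:ℂ)*(ν:ℂ)/2
            - Complex.I*(π:ℂ)*(ν:ℂ))/(2*Complex.I)))⁻¹ *
          SCDD ν νm νp (Complex.I*(π:ℂ)*((1 - ν/2 : ℝ):ℂ) - Complex.I*(π:ℂ)*(ν:ℂ)/2)))) := by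
    have hreg := ((contA.mul contB).mul contC).tendsto.mono_left
      (nhdsWithin_le_nhds (s := {(Complex.I*(π:ℂ)*((1 - ν/2 : ℝ):ℂ))}ᶜ))
    have h := sing.mul hreg
    refine h.congr fun ζ => ?_
    simp only [S21, S11, SSG, Pi.mul_apply]
    ring
  -- ### the two limits agree
  refine ⟨_, T1, ?_⟩
  -- it remains to show the value of T2's limit equals that of T1's
  suffices hval : -(2*Complex.I) *
        (S11 ν νm νp (Complex.I*(π:ℂ)*((1 - ν/2 : ℝ):ℂ) + Complex.I*(π:ℂ)*(ν:ℂ)/2) *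
          (Complex.tan ((Complex.I*(π:ℂ)*((1 - ν/2 : ℝ):ℂ) - Complex.I*(π:ℂ)*(ν:ℂ)/2
            - Complex.I*(π:ℂ)*(ν:ℂ))/(2*Complex.I)))⁻¹ *
          SCDD ν νm νp (Complex.I*(π:ℂ)*((1 - ν/2 : ℝ):ℂ) - Complex.I*(π:ℂ)*(ν:ℂ)/2))
      = 2*Complex.I *
        (Complex.tan ((Complex.I*(π:ℂ)*(ν:ℂ) + Complex.I*(π:ℂ)*(ν:ℂ))/(2*Complex.I)) *
          SCDD ν νm νp (Complex.I*(π:ℂ)*(ν:ℂ))) by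
    rw [hval]
    exact T2
  -- evaluate everything in real terms
  rw [hq1, hq2, argsimp_sub, argsimp_add]
  simp only [S11]
  rw [SSG_eval, SCDD_eval, SCDD_eval, SCDD_eval, ← Complex.ofReal_tan, ← Complex.ofReal_tan]
  -- real trigonometric identities
  have htν0 : Real.tan (π*(1-ν)/2) ≠ 0 := rtan_ne (by linarith) (by linarith) (by linarith)
  have ht1 : Real.tan (π*(1+ν)/2) = -Real.tan (π*(1-ν)/2) := by
    rw [show π*(1+ν)/2 = π - π*(1-ν)/2 by ring, Real.tan_pi_sub]
  have ht2 : Real.tan (π*((1-ν)-ν)/2) = (Real.tan (π*ν))⁻¹ := by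
    rw [show π*((1-ν)-ν)/2 = π/2 - π*ν by ring, Real.tan_pi_div_two_sub]
  have ht3 : Real.tan (π*(ν+ν)/2) = Real.tan (π*ν) := by
    rw [show π*(ν+ν)/2 = π*ν by ring]
  -- rg at 1 is 1
  have hg1 : rg (ν-νm) 1 = 1 := rg_one _ (rcos_ne (by linarith) (by linarith))
  have hg2 : rg (ν+νp) 1 = 1 := rg_one _ (rcos_ne (by linarith) (by linarith))
  have hg3 : rg (1-ν+νm) 1 = 1 := rg_one _ (rcos_ne (by linarith) (by linarith))
  have hg4 : rg (1-ν-νp) 1 = 1 := rg_one _ (rcos_ne (by linarith) (by linarith))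
  -- crossing symmetry of the CDD product
  have pair1 := rg_pair (ν-νm) ν
    (rsin_ne (by linarith) (by linarith)) (rsin_ne (by linarith) (by linarith))
    (rsin_ne (by linarith) (by linarith)) (rsin_ne (by linarith) (by linarith))
  have pair2 := rg_pair (ν+νp) ν
    (rsin_ne (by linarith) (by linarith)) (rsin_ne (by linarith) (by linarith))
    (rsin_ne (by linarith) (by linarith)) (rsin_ne (by linarith) (by linarith))
  rw [show (1:ℝ)-(ν-νm) = 1-ν+νm by ring] at pair1
  rw [show (1:ℝ)-(ν+νp) = 1-ν-νp by ring] at pair2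
  have hPs : rg (ν-νm) ν * rg (ν+νp) ν * rg (1-ν+νm) ν * rg (1-ν-νp) ν
      = rg (ν-νm) (1-ν) * rg (ν+νp) (1-ν) * rg (1-ν+νm) (1-ν) * rg (1-ν-νp) (1-ν) := by
    linear_combination rg (ν+νp) ν * rg (1-ν-νp) ν * pair1
      + rg (ν-νm) (1-ν) * rg (1-ν+νm) (1-ν) * pair2
  rw [ht1, ht2, ht3, hg1, hg2, hg3, hg4, hPs, neg_div, div_self htν0]
  push_cast
  rw [inv_inv]
  ring
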